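/- arXiv:2308.15580 — 6 statements merged into one kernel-verified Lean document; each statement's English description precedes it below -/
import Mathlib

section
/- Let X ⊆ Y be full continua in the complex plane and let D be a decoration of Y relative to X. Then D ∪ X = cl(D) ∪ X, and this set is a full continuum, i.e., it is nonempty, compact, connected, and its complement in ℂ is connected. -/
open Set Topology

/-- A connected component of a set absorbs the part of its closure inside the set. -/
lemma closure_inter_connectedComponentIn {α : Type*} [TopologicalSpace α] {s : Set α} {x : α} :
    closure (connectedComponentIn s x) ∩ s ⊆ connectedComponentIn s x := by
  by_cases hx : x ∈ s
  · have hsub : connectedComponentIn s x ⊆ closure (connectedComponentIn s x) ∩ s :=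
      subset_inter subset_closure (connectedComponentIn_subset s x)
    have hpre : IsPreconnected (closure (connectedComponentIn s x) ∩ s) :=
      (isPreconnected_connectedComponentIn (x := x) (F := s)).subset_closure hsub
        inter_subset_left
    exact hpre.subset_connectedComponentIn (hsub (mem_connectedComponentIn hx))
      inter_subset_right
  · simp [connectedComponentIn_eq_empty hx]

/-- Šura-Bura corollary: in a compact Hausdorff space, if the connected component of a point
is contained in an open set, then some clopen set containing the point is contained in it. -/
lemma exists_isClopen_of_connectedComponent_subset {α : Type*} [TopologicalSpace α]
    [CompactSpace α] [T2Space α] {x : α} {U : Set α} (hU : IsOpen U)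
    (h : connectedComponent x ⊆ U) : ∃ V : Set α, IsClopen V ∧ x ∈ V ∧ V ⊆ U := by
  have heq := connectedComponent_eq_iInter_isClopen x
  have hcpt : IsCompact Uᶜ := hU.isClosed_compl.isCompact
  have hempty : Uᶜ ∩ ⋂ s : { s : Set α // IsClopen s ∧ x ∈ s }, (s : Set α) = ∅ := by
    rw [← heq, eq_empty_iff_forall_notMem]
    exact fun z hz => hz.1 (h hz.2)
  obtain ⟨t, ht⟩ := hcpt.elim_finite_subfamily_closed _ (fun s => s.2.1.1) hempty
  refine ⟨⋂ i ∈ t, (i : Set α), isClopen_biInter_finset (fun i _ => i.2.1), ?_, ?_⟩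
  · exact mem_iInter₂.mpr fun i _ => i.2.2
  · intro z hz
    by_contra hzU
    exact (eq_empty_iff_forall_notMem.mp ht z) ⟨hzU, hz⟩

/-- Boundary bumping: the closure of a connected component of `Y \ X` meets `X`. -/
lemma closure_component_meets {X Y : Set ℂ} (hYcomp : IsCompact Y) (hYconn : IsPreconnected Y)
    (hXne : X.Nonempty) (hXcl : IsClosed X) (hXY : X ⊆ Y) {x : ℂ} (hx : x ∈ Y \ X) :
    (closure (connectedComponentIn (Y \ X) x) ∩ X).Nonempty := by
  by_contra hcon
  set D := connectedComponentIn (Y \ X) x with hDdef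
  have hxD : x ∈ D := mem_connectedComponentIn hx
  have hDsub : D ⊆ Y \ X := connectedComponentIn_subset _ _
  have hclY : closure D ⊆ Y :=
    closure_minimal (hDsub.trans diff_subset) hYcomp.isClosed
  have hclX : closure D ∩ X = ∅ := not_nonempty_iff_eq_empty.mp hcon
  have hclD : closure D ⊆ D := by
    intro z hz
    have hzYX : z ∈ Y \ X := ⟨hclY hz, fun hzX =>
      (eq_empty_iff_forall_notMem.mp hclX z) ⟨hz, hzX⟩⟩
    exact closure_inter_connectedComponentIn ⟨hz, hzYX⟩
  have hDclosed : IsClosed D := isClosed_of_closure_subset hclD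
  have hDcomp : IsCompact D := hYcomp.of_isClosed_subset hDclosed (hDsub.trans diff_subset)
  have hdisjDX : Disjoint D X := by
    rw [disjoint_iff_inter_eq_empty, eq_empty_iff_forall_notMem]
    exact fun z hz => (hDsub hz.1).2 hz.2
  obtain ⟨W1, W2, hW1o, hW2o, hDW1, hXW2, hW12⟩ :=
    SeparatedNhds.of_isCompact_isCompact hDcomp (hYcomp.of_isClosed_subset hXcl hXY) hdisjDX
  have hW1X : W1 ∩ X = ∅ := by
    rw [eq_empty_iff_forall_notMem]
    exact fun z hz => (disjoint_left.mp hW12) hz.1 (hXW2 hz.2)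
  have hclW1X : closure W1 ∩ X = ∅ := by
    rw [eq_empty_iff_forall_notMem]
    intro z hz
    have : closure W1 ⊆ W2ᶜ :=
      closure_minimal (fun w hw hw2 => (disjoint_left.mp hW12) hw hw2) hW2o.isClosed_compl
    exact this hz.1 (hXW2 hz.2)
  set A := closure W1 ∩ Y with hAdef
  have hAcomp : IsCompact A :=
    hYcomp.of_isClosed_subset (isClosed_closure.inter hYcomp.isClosed) inter_subset_right
  have hxA : x ∈ A := ⟨subset_closure (hDW1 hxD), hx.1⟩
  have hAYX : A ⊆ Y \ X := fun z hz =>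
    ⟨hz.2, fun hzX => (eq_empty_iff_forall_notMem.mp hclW1X z) ⟨hz.1, hzX⟩⟩
  have hCD : connectedComponentIn A x ⊆ D :=
    isPreconnected_connectedComponentIn.subset_connectedComponentIn
      (mem_connectedComponentIn hxA) ((connectedComponentIn_subset A x).trans hAYX)
  haveI : CompactSpace A := isCompact_iff_compactSpace.mp hAcomp
  set p : A := ⟨x, hxA⟩ with hpdef
  have hcompsub : connectedComponent p ⊆ (Subtype.val ⁻¹' W1 : Set A) := by
    intro q hq
    have hqC : (q : ℂ) ∈ connectedComponentIn A x := by
      rw [connectedComponentIn_eq_image hxA]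
      exact mem_image_of_mem _ hq
    exact hDW1 (hCD hqC)
  obtain ⟨V', hV'clopen, hpV', hV'W1⟩ :=
    exists_isClopen_of_connectedComponent_subset (hW1o.preimage continuous_subtype_val) hcompsub
  set V : Set ℂ := Subtype.val '' V' with hVdef
  have hVclosed : IsClosed V :=
    (hV'clopen.1.isCompact.image continuous_subtype_val).isClosed
  obtain ⟨O, hOopen, hOV'⟩ := isOpen_induced_iff.mp hV'clopen.2
  have hVOA : V = O ∩ A := by
    rw [hVdef, ← hOV', Subtype.image_preimage_coe]
    exact inter_comm _ _
  have hVW1 : V ⊆ W1 := by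
    rintro z ⟨q, hq, rfl⟩
    exact hV'W1 hq
  have hxV : x ∈ V := ⟨p, hpV', rfl⟩
  have hYOW1V : Y ∩ (O ∩ W1) ⊆ V := by
    rintro z ⟨hzY, hzO, hzW1⟩
    rw [hVOA]
    exact ⟨hzO, subset_closure hzW1, hzY⟩
  -- contradiction with connectedness of Y
  obtain ⟨x0, hx0X⟩ := hXne
  have h1 : (Y ∩ (O ∩ W1)).Nonempty := by
    refine ⟨x, hx.1, ?_⟩
    have : x ∈ O ∩ A := hVOA ▸ hxV
    exact ⟨this.1, hDW1 hxD⟩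
  have h2 : (Y ∩ Vᶜ).Nonempty := by
    refine ⟨x0, hXY hx0X, fun hx0V => ?_⟩
    exact (eq_empty_iff_forall_notMem.mp hW1X x0) ⟨hVW1 hx0V, hx0X⟩
  have hcover : Y ⊆ (O ∩ W1) ∪ Vᶜ := by
    intro z _
    by_cases hzV : z ∈ V
    · left
      have hz' : z ∈ O ∩ A := hVOA ▸ hzV
      exact ⟨hz'.1, hVW1 hzV⟩
    · exact Or.inr hzV
  obtain ⟨z, hzY, hzu, hzv⟩ :=
    hYconn (O ∩ W1) Vᶜ (hOopen.inter hW1o) hVclosed.isOpen_compl hcover h1 h2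
  exact hzv (hYOW1V ⟨hzY, hzu⟩)

/-- A *full continuum* in the plane: a nonempty compact connected set whose
complement is connected. (`IsConnected` includes nonemptiness.) -/
def FullContinuum (X : Set ℂ) : Prop :=
  IsCompact X ∧ IsConnected X ∧ IsConnected Xᶜ

theorem stmt2 (X Y : Set ℂ) (hX : FullContinuum X) (hY : FullContinuum Y)
    (hXY : X ⊆ Y) (D : Set ℂ)
    (hD : ∃ x ∈ Y \ X, D = connectedComponentIn (Y \ X) x) :
    D ∪ X = closure D ∪ X ∧ FullContinuum (D ∪ X) := by
  obtain ⟨hXcomp, hXconn, hXc⟩ := hX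
  obtain ⟨hYcomp, hYconn, hYc⟩ := hY
  obtain ⟨x, hx, rfl⟩ := hD
  set D := connectedComponentIn (Y \ X) x with hDdef
  have hxD : x ∈ D := mem_connectedComponentIn hx
  have hDsub : D ⊆ Y \ X := connectedComponentIn_subset _ _
  -- closures of components are trapped in component ∪ X
  have trap : ∀ z ∈ Y \ X, closure (connectedComponentIn (Y \ X) z) ⊆
      connectedComponentIn (Y \ X) z ∪ X := by
    intro z hz w hw
    have hwY : w ∈ Y := closure_minimal
      ((connectedComponentIn_subset (Y \ X) z).trans diff_subset) hYcomp.isClosed hw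
    by_cases hwX : w ∈ X
    · exact Or.inr hwX
    · exact Or.inl (closure_inter_connectedComponentIn ⟨hw, hwY, hwX⟩)
  have hclD : closure D ⊆ D ∪ X := trap x hx
  have part1 : D ∪ X = closure D ∪ X := by
    apply Subset.antisymm
    · exact union_subset_union_left X subset_closure
    · exact union_subset (fun w hw => hclD hw) subset_union_right
  refine ⟨part1, ?_, ?_, ?_⟩
  · -- compactness
    rw [part1]
    exact hYcomp.of_isClosed_subset (isClosed_closure.union hXcomp.isClosed)
      (union_subset (fun w hw => by
        rcases hclD hw with h | h
        · exact diff_subset (hDsub h)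
        · exact hXY h) hXY)
  · -- connectedness
    rw [part1]
    obtain ⟨w, hw⟩ := closure_component_meets hYcomp hYconn.isPreconnected hXconn.nonempty
      hXcomp.isClosed hXY hx
    have hclconn : IsConnected (closure D) :=
      ⟨⟨x, subset_closure hxD⟩, isPreconnected_connectedComponentIn.closure⟩
    exact hclconn.union ⟨w, hw⟩ hXconn
  · -- complement is connected
    set K := D ∪ X with hKdef
    have hKY : K ⊆ Y := union_subset (hDsub.trans diff_subset) hXY
    have hKclosed : IsClosed K := by
      rw [part1]
      exact isClosed_closure.union hXcomp.isClosed
    have hKcopen : IsOpen Kᶜ := hKclosed.isOpen_compl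
    have hYcKc : Yᶜ ⊆ Kᶜ := compl_subset_compl.mpr hKY
    obtain ⟨y0, hy0⟩ := hYc.nonempty
    -- every component of Kᶜ meets Yᶜ
    have key : ∀ z ∈ Kᶜ, (connectedComponentIn Kᶜ z ∩ Yᶜ).Nonempty := by
      intro z hz
      by_contra hcon
      set V := connectedComponentIn Kᶜ z with hVdef
      have hVY : V ⊆ Y := by
        intro w hw
        by_contra hwY
        exact hcon ⟨w, hw, hwY⟩
      have hVopen : IsOpen V := hKcopen.connectedComponentIn
      have hzV : z ∈ V := mem_connectedComponentIn hz
      have hVKc : V ⊆ Kᶜ := connectedComponentIn_subset _ _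
      have hVYX : V ⊆ Y \ X := fun w hw =>
        ⟨hVY hw, fun hwX => (hVKc hw) (Or.inr hwX)⟩
      set D' := connectedComponentIn (Y \ X) z with hD'def
      have hVD' : V ⊆ D' :=
        isPreconnected_connectedComponentIn.subset_connectedComponentIn
          (mem_connectedComponentIn hz) hVYX
      have hzD : z ∉ D := fun h => (hz : z ∉ K) (Or.inl h)
      have hD'D : ∀ w, w ∈ D' → w ∉ D := by
        intro w hwD' hwD
        have h1 : D' = connectedComponentIn (Y \ X) w := connectedComponentIn_eq hwD'
        have h2 : D = connectedComponentIn (Y \ X) w := connectedComponentIn_eq hwD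
        have hzD' : z ∈ D' := mem_connectedComponentIn (hVYX hzV)
        have hzw : z ∈ connectedComponentIn (Y \ X) w := by rw [← h1]; exact hzD'
        exact hzD (h2.symm ▸ hzw)
      -- closure of V within Xᶜ stays in V
      have hclVXc : closure V ∩ Xᶜ ⊆ V := by
        intro w ⟨hwcl, hwX⟩
        have hwD' : w ∈ D' := by
          have := trap z (hVYX hzV)
          rw [← hD'def] at this
          have hwclD' : w ∈ closure D' := closure_mono hVD' hwcl
          rcases this hwclD' with h | h
          · exact h
          · exact absurd h hwX
        have hwKc : w ∈ Kᶜ := fun hwK => by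
          rcases hwK with h | h
          · exact hD'D w hwD' h
          · exact hwX h
        have hS : IsPreconnected (closure V ∩ Kᶜ) :=
          isPreconnected_connectedComponentIn.subset_closure
            (subset_inter subset_closure hVKc) inter_subset_left
        exact hS.subset_connectedComponentIn
          (⟨subset_closure hzV, hz⟩ : z ∈ closure V ∩ Kᶜ) inter_subset_right ⟨hwcl, hwKc⟩
      -- Xᶜ is covered by V and (closure V)ᶜ, contradicting connectedness of Xᶜ
      have hzXc : z ∈ Xᶜ := fun h => (hz : z ∉ K) (Or.inr h)
      have hXcV : Xᶜ ⊆ closure V := by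
        intro w hwXc
        by_contra hwcl
        have hcover : Xᶜ ⊆ V ∪ (closure V)ᶜ := by
          intro a haX
          by_cases hacl : a ∈ closure V
          · exact Or.inl (hclVXc ⟨hacl, haX⟩)
          · exact Or.inr hacl
        obtain ⟨a, _, ha1, ha2⟩ := hXc.isPreconnected V (closure V)ᶜ hVopen
          isClosed_closure.isOpen_compl hcover ⟨z, hzXc, hzV⟩ ⟨w, hwXc, hwcl⟩
        exact ha2 (subset_closure ha1)
      have hy0Xc : y0 ∈ Xᶜ := compl_subset_compl.mpr hXY hy0
      exact hy0 (hVY (hclVXc ⟨hXcV hy0Xc, hy0Xc⟩))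
    -- conclude
    have hYcpre : IsPreconnected Yᶜ := hYc.isPreconnected
    have hsame : ∀ z ∈ Kᶜ, z ∈ connectedComponentIn Kᶜ y0 := by
      intro z hz
      obtain ⟨w, hwcomp, hwYc⟩ := key z hz
      have h1 : connectedComponentIn Kᶜ z = connectedComponentIn Kᶜ w :=
        connectedComponentIn_eq hwcomp
      have h2 : Yᶜ ⊆ connectedComponentIn Kᶜ w :=
        hYcpre.subset_connectedComponentIn hwYc hYcKc
      have hy0w : y0 ∈ connectedComponentIn Kᶜ z := by rw [h1]; exact h2 hy0
      have : connectedComponentIn Kᶜ z = connectedComponentIn Kᶜ y0 :=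
        connectedComponentIn_eq hy0w
      rw [← this]
      exact mem_connectedComponentIn hz
    have heq : Kᶜ = connectedComponentIn Kᶜ y0 :=
      Subset.antisymm hsame (connectedComponentIn_subset _ _)
    refine ⟨⟨y0, hYcKc hy0⟩, ?_⟩
    rw [heq]
    exact isPreconnected_connectedComponentIn
end

section
/- Let f : ℂ → ℂ be a complex polynomial map of degree 3, let V ⊆ ℂ be a nonempty open set, and let U be a connected component of f⁻¹(V) with the property that for every w ∈ V the number of solutions of f(z) = w lying in U, counted with multiplicity (i.e., the sum over z ∈ U with f(z) = w of the multiplicity of z as a root of the polynomial f − w), equals 2. Then for every w ∈ V there is exactly one point z ∈ f⁻¹(V) ∖ U with f(z) = w, that root is simple, and the restriction of f to f⁻¹(V) ∖ U is a homeomorphism onto V. -/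
open Polynomial Set in
open scoped Classical in
theorem stmt6 (p : Polynomial ℂ) (hdeg : p.natDegree = 3)
    (V : Set ℂ) (hVne : V.Nonempty) (hVopen : IsOpen V)
    (U : Set ℂ)
    (hU : ∃ x ∈ (fun z => p.eval z) ⁻¹' V,
      U = connectedComponentIn ((fun z => p.eval z) ⁻¹' V) x)
    (hcount : ∀ w ∈ V,
      (((p - Polynomial.C w).roots.filter (fun z => z ∈ U)).card = 2)) :
    (∀ w ∈ V, ∃! z : ℂ, z ∈ (fun z => p.eval z) ⁻¹' V \ U ∧ p.eval z = w) ∧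
    (∀ w ∈ V, ∀ z ∈ (fun z => p.eval z) ⁻¹' V \ U, p.eval z = w →
      Polynomial.rootMultiplicity z (p - Polynomial.C w) = 1) ∧
    (∃ e : (((fun z => p.eval z) ⁻¹' V \ U : Set ℂ)) ≃ₜ V,
      ∀ z : (((fun z => p.eval z) ⁻¹' V \ U : Set ℂ)), (e z : ℂ) = p.eval (z : ℂ)) := by
  have hcont : Continuous fun z : ℂ => p.eval z := p.continuous
  set f : ℂ → ℂ := fun z => p.eval z with hf
  set W : Set ℂ := f ⁻¹' V with hW
  have hWopen : IsOpen W := hVopen.preimage hcont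
  have hqdeg : ∀ w : ℂ, (p - C w).natDegree = 3 := fun w => by
    rw [natDegree_sub_C, hdeg]
  have hqne : ∀ w : ℂ, p - C w ≠ 0 := fun w h => by
    have := hqdeg w; rw [h] at this; simp at this
  have hcard : ∀ w : ℂ, (p - C w).roots.card = 3 := fun w => by
    rw [← hqdeg w]
    exact splits_iff_card_roots.mp (IsAlgClosed.splits _)
  have hout : ∀ w ∈ V, ((p - C w).roots.filter (fun z => z ∉ U)).card = 1 := by
    intro w hw
    have h3 := hcard w
    rw [← Multiset.filter_add_not (fun z => z ∈ U) (p - C w).roots,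
      Multiset.card_add, hcount w hw] at h3
    omega
  -- membership characterization
  have hmem : ∀ w z : ℂ, z ∈ (p - C w).roots ↔ p.eval z = w := by
    intro w z
    rw [mem_roots (hqne w)]
    simp [IsRoot, sub_eq_zero]
  -- part 1
  have part1 : ∀ w ∈ V, ∃! z : ℂ, z ∈ W \ U ∧ p.eval z = w := by
    intro w hw
    obtain ⟨z₀, hz₀⟩ := Multiset.card_eq_one.mp (hout w hw)
    have hz₀mem : z₀ ∈ (p - C w).roots.filter (fun z => z ∉ U) := by
      rw [hz₀]; exact Multiset.mem_singleton_self z₀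
    rw [Multiset.mem_filter] at hz₀mem
    have heval : p.eval z₀ = w := (hmem w z₀).mp hz₀mem.1
    refine ⟨z₀, ⟨⟨?_, hz₀mem.2⟩, heval⟩, ?_⟩
    · show f z₀ ∈ V; rw [hf]; simp only [heval]; exact hw
    · rintro z ⟨⟨hzW, hzU⟩, hzev⟩
      have : z ∈ (p - C w).roots.filter (fun z => z ∉ U) :=
        Multiset.mem_filter.mpr ⟨(hmem w z).mpr hzev, hzU⟩
      rw [hz₀] at this
      exact Multiset.mem_singleton.mp this
  -- part 2
  have part2 : ∀ w ∈ V, ∀ z ∈ W \ U, p.eval z = w →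
      (p - C w).rootMultiplicity z = 1 := by
    intro w hw z hz hzev
    have hzmem : z ∈ (p - C w).roots.filter (fun z => z ∉ U) :=
      Multiset.mem_filter.mpr ⟨(hmem w z).mpr hzev, hz.2⟩
    have h1 : Multiset.count z ((p - C w).roots.filter (fun z => z ∉ U)) = 1 := by
      have hle : Multiset.count z ((p - C w).roots.filter (fun z => z ∉ U)) ≤ 1 := by
        rw [← hout w hw]; exact Multiset.count_le_card z _
      have hge := Multiset.one_le_count_iff_mem.mpr hzmem
      omega
    rw [Multiset.count_filter, if_pos hz.2, count_roots] at h1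
    exact h1
  refine ⟨part1, part2, ?_⟩
  -- openness of U and of W \ U
  obtain ⟨x, hxW, hUeq⟩ := hU
  have hSopen : IsOpen (W \ U) := by
    rw [isOpen_iff_forall_mem_open]
    intro y hy
    refine ⟨connectedComponentIn W y, ?_, hWopen.connectedComponentIn, mem_connectedComponentIn hy.1⟩
    intro u hu
    refine ⟨connectedComponentIn_subset W y hu, fun huU => ?_⟩
    have h1 : connectedComponentIn W y = connectedComponentIn W u :=
      connectedComponentIn_eq hu
    have h2 : connectedComponentIn W x = connectedComponentIn W u :=
      connectedComponentIn_eq (by rw [← hUeq]; exact huU)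
    have hyU : y ∈ U := by
      rw [hUeq, h2, ← h1]
      exact mem_connectedComponentIn hy.1
    exact hy.2 hyU
  -- open mapping
  have hopen : ∀ s : Set ℂ, IsOpen s → IsOpen (f '' s) := by
    have han : AnalyticOnNhd ℂ f Set.univ := AnalyticOnNhd.eval_polynomial p
    rcases han.is_constant_or_isOpen isPreconnected_univ with ⟨w, hwc⟩ | h
    · exfalso
      have : p = C w := Polynomial.funext fun r => by
        simpa using hwc r (Set.mem_univ r)
      rw [this] at hdeg
      simp at hdeg
    · exact fun s hs => h s (Set.subset_univ s) hs
  -- build homeomorphism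
  set S : Set ℂ := W \ U with hS
  have hg : ∀ z : S, f z ∈ V := fun z => z.2.1
  let g : S → V := fun z => ⟨f z, hg z⟩
  have hbij : Function.Bijective g := by
    constructor
    · intro a b hab
      obtain ⟨z, hz, huniq⟩ := part1 (f a) (hg a)
      have ha : (a : ℂ) = z := huniq a ⟨a.2, rfl⟩
      have hb : (b : ℂ) = z := huniq b ⟨b.2, congrArg Subtype.val hab |>.symm⟩
      exact Subtype.ext (ha.trans hb.symm)
    · rintro ⟨w, hw⟩
      obtain ⟨z, ⟨hzS, hzev⟩, _⟩ := part1 w hw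
      exact ⟨⟨z, hzS⟩, Subtype.ext hzev⟩
  have hgc : Continuous g := Continuous.subtype_mk (hcont.comp continuous_subtype_val) _
  have hgo : IsOpenMap g := by
    intro O hO
    have h1 : IsOpen (Subtype.val '' O) := hSopen.isOpenMap_subtype_val O hO
    have h2 : IsOpen (f '' (Subtype.val '' O)) := hopen _ h1
    have h3 : Subtype.val '' (g '' O) = f '' (Subtype.val '' O) := by
      rw [Set.image_image, Set.image_image]
    have h4 : g '' O = Subtype.val ⁻¹' (f '' (Subtype.val '' O)) := by
      rw [← h3, Set.preimage_image_eq _ Subtype.val_injective]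
    rw [h4]
    exact h2.preimage continuous_subtype_val
  exact ⟨(Equiv.ofBijective g hbij).toHomeomorphOfContinuousOpen hgc hgo,
    fun z => rfl⟩
end

section
/- Let g : X → Y be a continuous map between topological spaces that is both an open map and a closed map. Let D ⊆ Y be a connected set, and let E be a nonempty connected component of g⁻¹(D) that is open in the subspace g⁻¹(D). Then g(E) = D. -/
theorem stmt7 {X Y : Type*} [TopologicalSpace X] [TopologicalSpace Y]
    (g : X → Y) (hgc : Continuous g) (hgo : IsOpenMap g) (hgcl : IsClosedMap g)
    (D : Set Y) (hD : IsConnected D)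
    (E : Set X) (hE : ∃ x ∈ g ⁻¹' D, E = connectedComponentIn (g ⁻¹' D) x)
    (hEopen : ∃ O : Set X, IsOpen O ∧ E = O ∩ g ⁻¹' D) :
    g '' E = D := by
  obtain ⟨x, hx, hEdef⟩ := hE
  obtain ⟨O, hO, hEO⟩ := hEopen
  have hEsub : E ⊆ g ⁻¹' D := hEdef ▸ connectedComponentIn_subset _ _
  have hEne : E.Nonempty := ⟨x, hEdef ▸ mem_connectedComponentIn hx⟩
  -- E is closed in the subspace g⁻¹' D, so E = closure E ∩ g⁻¹' D
  have hEcl : E = closure E ∩ g ⁻¹' D := by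
    apply subset_antisymm (Set.subset_inter subset_closure hEsub)
    rintro y ⟨hy1, hy2⟩
    -- y in closure E ∩ g⁻¹' D; connected component closed in subspace
    have : (⟨y, hy2⟩ : g ⁻¹' D) ∈ closure (Subtype.val ⁻¹' E) := by
      rw [closure_subtype, Set.image_preimage_eq_inter_range, Subtype.range_coe,
        Set.inter_eq_left.mpr hEsub]
      exact hy1
    have hcomp : Subtype.val ⁻¹' E = connectedComponent (⟨x, hx⟩ : g ⁻¹' D) := by
      rw [hEdef, connectedComponentIn_eq_image hx, Set.preimage_image_eq _ Subtype.val_injective]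
    rw [hcomp] at this
    have := isClosed_connectedComponent.closure_subset this
    rw [← hcomp] at this
    exact this
  haveI : PreconnectedSpace D := Subtype.preconnectedSpace hD.isPreconnected
  have himg_sub : g '' E ⊆ D := by
    rintro _ ⟨z, hz, rfl⟩; exact hEsub hz
  -- g '' E = g '' O ∩ D and = g '' closure E ∩ D
  have h1 : g '' E = g '' O ∩ D := by rw [hEO, Set.image_inter_preimage]
  have h2 : g '' E = g '' (closure E) ∩ D := by
    conv_lhs => rw [hEcl]
    rw [Set.image_inter_preimage]
  set S : Set D := Subtype.val ⁻¹' (g '' E) with hS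
  have hSopen : IsOpen S := by
    rw [hS, h1, Set.preimage_inter]
    have : (Subtype.val ⁻¹' D : Set D) = Set.univ := by ext ⟨y, hy⟩; simpa
    rw [this, Set.inter_univ]
    exact (hgo O hO).preimage continuous_subtype_val
  have hSclosed : IsClosed S := by
    rw [hS, h2, Set.preimage_inter]
    have : (Subtype.val ⁻¹' D : Set D) = Set.univ := by ext ⟨y, hy⟩; simpa
    rw [this, Set.inter_univ]
    exact (hgcl _ isClosed_closure).preimage continuous_subtype_val
  have hSne : S.Nonempty := by
    obtain ⟨z, hz⟩ := hEne
    exact ⟨⟨g z, hEsub hz⟩, Set.mem_image_of_mem g hz⟩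
  have : S = Set.univ := IsClopen.eq_univ ⟨hSclosed, hSopen⟩ hSne
  apply subset_antisymm himg_sub
  intro y hy
  have : (⟨y, hy⟩ : D) ∈ S := this ▸ Set.mem_univ _
  exact this
end

section
/- Let q ∈ (0,1), let N be a positive integer with 2q^N < 1/2, and let s : ℕ → ℝ be a sequence of nonnegative real numbers. Let S be a (possibly empty, finite, or infinite) set of positive integers, enumerated n₁ < n₂ < ⋯, such that n₁ ≥ N and n_{i+1} − n_i ≥ N for all i. Assume that s_{m+1} ≤ q·s_m whenever m + 1 ∉ S, and s_{m+1} ≤ 2q·s_m whenever m + 1 ∈ S. Then s_m ≤ s₀ · 2^{−m/N} for every m ≥ 0. -/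
theorem stmt8 (q : ℝ) (hq : q ∈ Set.Ioo (0:ℝ) 1) (N : ℕ) (hN : 0 < N)
    (hqN : 2 * q ^ N < 1 / 2)
    (s : ℕ → ℝ) (hs : ∀ n, 0 ≤ s n)
    (S : Set ℕ) (hSpos : ∀ n ∈ S, 0 < n)
    (hSfirst : ∀ n ∈ S, N ≤ n)
    (hSgap : ∀ m ∈ S, ∀ n ∈ S, m < n → m + N ≤ n)
    (hgood : ∀ m : ℕ, m + 1 ∉ S → s (m + 1) ≤ q * s m)
    (hbad : ∀ m : ℕ, m + 1 ∈ S → s (m + 1) ≤ 2 * q * s m) :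
    ∀ m : ℕ, s m ≤ s 0 * (2 : ℝ) ^ (-(m : ℝ) / (N : ℝ)) := by
  classical
  obtain ⟨hq0, hq1⟩ := hq
  set c : ℕ → ℕ := fun m => ((Finset.Icc 1 m).filter (· ∈ S)).card with hc
  have hins : ∀ m : ℕ, Finset.Icc 1 (m+1) = insert (m+1) (Finset.Icc 1 m) := by
    intro m
    rw [← Finset.insert_Icc_right_eq_Icc_add_one (by omega)]
  have hnotmem : ∀ m : ℕ, (m+1) ∉ (Finset.Icc 1 m).filter (· ∈ S) := by
    intro m
    simp [Finset.mem_Icc]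
  -- counting lemma : N * c m ≤ m
  have hcount : ∀ m, N * c m ≤ m := by
    intro m
    induction m using Nat.strong_induction_on with
    | _ m ih =>
      match m with
      | 0 => simp [hc]
      | m + 1 =>
        by_cases hmem : m + 1 ∈ S
        · have hNle : N ≤ m + 1 := hSfirst _ hmem
          have heq : (Finset.Icc 1 m).filter (· ∈ S)
              = (Finset.Icc 1 (m+1-N)).filter (· ∈ S) := by
            ext n
            simp only [Finset.mem_filter, Finset.mem_Icc]
            constructor
            · rintro ⟨⟨h1, h2⟩, hnS⟩
              have := hSgap n hnS (m+1) hmem (by omega)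
              exact ⟨⟨h1, by omega⟩, hnS⟩
            · rintro ⟨⟨h1, h2⟩, hnS⟩
              exact ⟨⟨h1, by omega⟩, hnS⟩
          have hceq : c (m+1) = c (m+1-N) + 1 := by
            simp only [hc, hins m, Finset.filter_insert, if_pos hmem]
            rw [Finset.card_insert_of_notMem (hnotmem m), heq]
          rw [hceq, Nat.mul_succ]
          have hih := ih (m+1-N) (by omega)
          set t := N * c (m+1-N) with ht
          omega
        · have hceq : c (m+1) = c m := by
            simp only [hc, hins m, Finset.filter_insert, if_neg hmem]
          rw [hceq]
          exact le_trans (ih m (by omega)) (by omega)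
  -- inductive bound : s m ≤ s 0 * q^m * 2^(c m)
  have hbound : ∀ m, s m ≤ s 0 * q ^ m * 2 ^ (c m) := by
    intro m
    induction m with
    | zero => simp [hc]
    | succ m ih =>
      by_cases hmem : m + 1 ∈ S
      · have hceq : c (m+1) = c m + 1 := by
          simp only [hc, hins m, Finset.filter_insert, if_pos hmem]
          rw [Finset.card_insert_of_notMem (hnotmem m)]
        have h1 := hbad m hmem
        have h2 : 2 * q * s m ≤ 2 * q * (s 0 * q ^ m * 2 ^ (c m)) := by
          have : (0:ℝ) ≤ 2 * q := by linarith
          exact mul_le_mul_of_nonneg_left ih this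
        rw [hceq]
        calc s (m+1) ≤ 2 * q * (s 0 * q ^ m * 2 ^ (c m)) := le_trans h1 h2
          _ = s 0 * q ^ (m+1) * 2 ^ (c m + 1) := by ring
      · have hceq : c (m+1) = c m := by
          simp only [hc, hins m, Finset.filter_insert, if_neg hmem]
        have h1 := hgood m hmem
        have h2 : q * s m ≤ q * (s 0 * q ^ m * 2 ^ (c m)) :=
          mul_le_mul_of_nonneg_left ih (le_of_lt hq0)
        rw [hceq]
        calc s (m+1) ≤ q * (s 0 * q ^ m * 2 ^ (c m)) := le_trans h1 h2
          _ = s 0 * q ^ (m+1) * 2 ^ (c m) := by ring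
  -- final analytic estimate
  intro m
  have hNR : (0:ℝ) < (N:ℝ) := by exact_mod_cast hN
  set α : ℝ := (m:ℝ) / (N:ℝ) with hα
  have hα0 : 0 ≤ α := by positivity
  have hqN4 : q ^ N < 1 / 4 := by linarith
  -- q^m ≤ 2^(-2α)
  have hqm : (q:ℝ) ^ m ≤ (2:ℝ) ^ (-2 * α) := by
    have hNα : (N:ℝ) * α = (m:ℝ) := by
      rw [hα]; field_simp [hNR.ne']
    have e1 : (q:ℝ) ^ m = ((q:ℝ) ^ N) ^ α := by
      rw [← Real.rpow_natCast q N, ← Real.rpow_mul (le_of_lt hq0), hNα,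
        Real.rpow_natCast]
    have e2 : ((2:ℝ) ^ ((-2 : ℝ))) ^ α = (2:ℝ) ^ (-2 * α) := by
      rw [← Real.rpow_mul (by norm_num : (0:ℝ) ≤ 2)]
    have h14 : (1/4 : ℝ) = (2:ℝ) ^ ((-2 : ℝ)) := by
      rw [Real.rpow_neg (by norm_num : (0:ℝ) ≤ 2)]
      norm_num
    rw [e1, ← e2]
    have hbase : (q:ℝ) ^ N ≤ (2:ℝ) ^ ((-2:ℝ)) := by rw [← h14]; linarith
    exact Real.rpow_le_rpow (by positivity) hbase hα0
  -- 2^(c m) ≤ 2^α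
  have h2cm : (2:ℝ) ^ (c m) ≤ (2:ℝ) ^ α := by
    have hle : ((c m : ℝ)) ≤ α := by
      rw [hα, le_div_iff₀ hNR]
      have := hcount m
      have : ((N * c m : ℕ) : ℝ) ≤ (m : ℝ) := by exact_mod_cast this
      push_cast at this
      linarith
    calc (2:ℝ) ^ (c m) = (2:ℝ) ^ ((c m : ℝ)) := by
          rw [Real.rpow_natCast]
      _ ≤ (2:ℝ) ^ α := Real.rpow_le_rpow_of_exponent_le (by norm_num) hle
  have hprod : q ^ m * (2:ℝ) ^ (c m) ≤ (2:ℝ) ^ (-(m : ℝ) / (N : ℝ)) := by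
    have h1 : q ^ m * (2:ℝ) ^ (c m) ≤ (2:ℝ) ^ (-2 * α) * (2:ℝ) ^ α := by
      apply mul_le_mul hqm h2cm (by positivity) (by positivity)
    have h2 : (2:ℝ) ^ (-2 * α) * (2:ℝ) ^ α = (2:ℝ) ^ (-α) := by
      rw [← Real.rpow_add (by norm_num : (0:ℝ) < 2)]
      ring_nf
    have h3 : -α = -(m : ℝ) / (N : ℝ) := by rw [hα]; ring
    rw [h2, h3] at h1
    exact h1
  calc s m ≤ s 0 * q ^ m * 2 ^ (c m) := hbound m
    _ = s 0 * (q ^ m * 2 ^ (c m)) := by ring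
    _ ≤ s 0 * (2:ℝ) ^ (-(m : ℝ) / (N : ℝ)) :=
        mul_le_mul_of_nonneg_left hprod (hs 0)
end

section
/- Fix q ∈ (0,1) and b > 0. Let (s_n)_{n≥0} be a sequence of positive real numbers and let B ⊆ ℕ be an infinite set of 'bad' subscripts, enumerated n₁ < n₂ < ⋯, such that s_{n+1} = q·s_n for every n ∉ B and s_{n+1} ≤ 2q·s_n + b for every n ∈ B. If n_{i+1} − n_i → ∞ as i → ∞, then s_{n_i} → 0 as i → ∞. -/
theorem stmt9 (q b : ℝ) (hq : q ∈ Set.Ioo (0:ℝ) 1) (hb : 0 < b)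
    (s : ℕ → ℝ) (hs : ∀ n, 0 < s n)
    (B : Set ℕ) (hB : B.Infinite)
    (hgood : ∀ n : ℕ, n ∉ B → s (n + 1) = q * s n)
    (hbad : ∀ n ∈ B, s (n + 1) ≤ 2 * q * s n + b)
    (hgap : Filter.Tendsto
      (fun i => Nat.nth (· ∈ B) (i + 1) - Nat.nth (· ∈ B) i)
      Filter.atTop Filter.atTop) :
    Filter.Tendsto (fun i => s (Nat.nth (· ∈ B) i)) Filter.atTop (nhds 0) := by
  classical
  obtain ⟨hq0, hq1⟩ := hq
  have hBset : {n | n ∈ B}.Infinite := hB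
  set m : ℕ → ℕ := Nat.nth (· ∈ B) with hm
  have hmono : StrictMono m := Nat.nth_strictMono hBset
  have hmem : ∀ i, m i ∈ B := fun i => Nat.nth_mem_of_infinite hBset i
  -- a run of good steps multiplies by q each step
  have hrun : ∀ (a k : ℕ), (∀ j < k, a + j ∉ B) → s (a + k) = q ^ k * s a := by
    intro a k
    induction k with
    | zero => intro _; simp
    | succ k ih =>
      intro h
      have h1 : s (a + k + 1) = q * s (a + k) := hgood _ (h k (by omega))
      have h2 := ih (fun j hj => h j (by omega))
      have : a + (k + 1) = a + k + 1 := by omega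
      rw [this, h1, h2, pow_succ]
      ring
  -- no bad indices strictly between consecutive bad indices
  have hbetween : ∀ i n, m i < n → n < m (i + 1) → n ∉ B := by
    intro i n h1 h2 hn
    have hcn : m (Nat.count (· ∈ B) n) = n := Nat.nth_count hn
    have hi : i < Nat.count (· ∈ B) n := by
      rw [← hcn] at h1; exact hmono.lt_iff_lt.mp h1
    have hi2 : Nat.count (· ∈ B) n < i + 1 := by
      rw [← hcn] at h2; exact hmono.lt_iff_lt.mp h2
    omega
  -- the recurrence between consecutive bad indices
  have hrec : ∀ i, s (m (i + 1)) ≤ 2 * q ^ (m (i + 1) - m i) * s (m i)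
      + q ^ (m (i + 1) - m i - 1) * b := by
    intro i
    have hd : m i < m (i + 1) := hmono (by omega)
    set d := m (i + 1) - m i with hdd
    have hd1 : 1 ≤ d := by omega
    have hrun' : s (m (i + 1)) = q ^ (d - 1) * s (m i + 1) := by
      have := hrun (m i + 1) (d - 1)
        (fun j hj => hbetween i (m i + 1 + j) (by omega) (by omega))
      rwa [show m i + 1 + (d - 1) = m (i + 1) by omega] at this
    have hb' : s (m i + 1) ≤ 2 * q * s (m i) + b := hbad _ (hmem i)
    have hqp : (0:ℝ) ≤ q ^ (d - 1) := by positivity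
    calc s (m (i + 1)) = q ^ (d - 1) * s (m i + 1) := hrun'
      _ ≤ q ^ (d - 1) * (2 * q * s (m i) + b) := by
          exact mul_le_mul_of_nonneg_left hb' hqp
      _ = 2 * (q ^ (d - 1) * q) * s (m i) + q ^ (d - 1) * b := by ring
      _ = 2 * q ^ d * s (m i) + q ^ (d - 1) * b := by
          rw [← pow_succ, show d - 1 + 1 = d by omega]
  rw [Metric.tendsto_atTop]
  intro ε hε
  set ε' := ε / 4 with hε'
  have hε'0 : 0 < ε' := by positivity
  have hpow : Filter.Tendsto (fun k => q ^ k) Filter.atTop (nhds 0) :=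
    tendsto_pow_atTop_nhds_zero_of_lt_one hq0.le hq1
  obtain ⟨K, hK⟩ := (Metric.tendsto_atTop.mp hpow) (min (1/4) (ε' / b)) (by positivity)
  have hKsmall : ∀ k ≥ K, q ^ k ≤ 1/4 ∧ q ^ k * b ≤ ε' := by
    intro k hk
    have := hK k hk
    rw [Real.dist_eq, sub_zero, abs_of_nonneg (by positivity)] at this
    constructor
    · exact le_of_lt (lt_of_lt_of_le this (min_le_left _ _))
    · have h2 : q ^ k ≤ ε' / b := le_of_lt (lt_of_lt_of_le this (min_le_right _ _))
      calc q ^ k * b ≤ (ε' / b) * b := by nlinarith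
        _ = ε' := by field_simp
  obtain ⟨N, hN⟩ := (Filter.tendsto_atTop.mp hgap (K + 1)).exists_forall_of_atTop
  -- contraction step for i ≥ N
  have hstep : ∀ i, N ≤ i → s (m (i + 1)) ≤ (1/2) * s (m i) + ε' := by
    intro i hi
    have hdK : K + 1 ≤ m (i + 1) - m i := hN i hi
    have hd : m i < m (i + 1) := hmono (by omega)
    set d := m (i + 1) - m i with hdd
    have h1 : q ^ d ≤ q ^ K := pow_le_pow_of_le_one hq0.le hq1.le (by omega)
    have h2 : q ^ (d - 1) ≤ q ^ K := pow_le_pow_of_le_one hq0.le hq1.le (by omega)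
    have hK1 := (hKsmall K le_rfl).1
    have hK2 := (hKsmall K le_rfl).2
    have hrec' := hrec i
    have hsp := hs (m i)
    have hqd : (0:ℝ) ≤ q ^ d := by positivity
    have hqd1 : (0:ℝ) ≤ q ^ (d - 1) := by positivity
    have hA : 2 * q ^ d * s (m i) ≤ (1/2) * s (m i) := by nlinarith
    have hB2 : q ^ (d - 1) * b ≤ ε' := by nlinarith
    linarith
  -- iterate the contraction
  have hind : ∀ k, s (m (N + k)) ≤ (1/2) ^ k * s (m N) + 2 * ε' := by
    intro k
    induction k with
    | zero => simp; linarith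
    | succ k ih =>
      have h1 := hstep (N + k) (by omega)
      rw [show N + k + 1 = N + (k + 1) by omega] at h1
      calc s (m (N + (k + 1))) ≤ (1/2) * s (m (N + k)) + ε' := h1
        _ ≤ (1/2) * ((1/2) ^ k * s (m N) + 2 * ε') + ε' := by linarith
        _ = (1/2) ^ (k + 1) * s (m N) + 2 * ε' := by rw [pow_succ]; ring
  obtain ⟨k0, hk0⟩ := exists_pow_lt_of_lt_one (div_pos hε'0 (hs (m N)))
    (show (1:ℝ)/2 < 1 by norm_num)
  have hk0' : (1/2:ℝ) ^ k0 * s (m N) < ε' := by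
    have := hs (m N)
    calc (1/2:ℝ) ^ k0 * s (m N) < (ε' / s (m N)) * s (m N) := by
          exact mul_lt_mul_of_pos_right hk0 this
      _ = ε' := by field_simp
  refine ⟨N + k0, fun i hi => ?_⟩
  have hi' : i = N + (i - N) := by omega
  have h1 := hind (i - N)
  rw [← hi'] at h1
  have h2 : (1/2:ℝ) ^ (i - N) ≤ (1/2) ^ k0 :=
    pow_le_pow_of_le_one (by norm_num) (by norm_num) (by omega)
  have h3 : (1/2:ℝ) ^ (i - N) * s (m N) ≤ (1/2) ^ k0 * s (m N) :=
    mul_le_mul_of_nonneg_right h2 (hs _).le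
  have hsi := hs (m i)
  rw [Real.dist_eq, sub_zero, abs_of_pos hsi]
  have : ε = 4 * ε' := by rw [hε']; ring
  linarith
end

section
/- Let h : ℝ/ℤ → ℝ/ℤ be a homeomorphism of the circle satisfying h(2x) = 2·h(x) for all x ∈ ℝ/ℤ (i.e., h commutes with the angle-doubling map), and suppose h is orientation preserving in the sense that it admits a lift H : ℝ → ℝ which is continuous, monotone nondecreasing, satisfies H(x + 1) = H(x) + 1 for all x, and satisfies h(x mod 1) = H(x) mod 1. Then h is the identity map of ℝ/ℤ. -/
theorem stmt10 (h : AddCircle (1 : ℝ) ≃ₜ AddCircle (1 : ℝ))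
    (hdouble : ∀ x : AddCircle (1 : ℝ), h (2 • x) = 2 • h x)
    (H : ℝ → ℝ) (hHcont : Continuous H) (hHmono : Monotone H)
    (hHper : ∀ x : ℝ, H (x + 1) = H x + 1)
    (hlift : ∀ x : ℝ, h (x : AddCircle (1 : ℝ)) = (H x : AddCircle (1 : ℝ))) :
    ∀ x : AddCircle (1 : ℝ), h x = x := by
  -- The defect g x = H (2x) - 2 H x is integer valued
  set g : ℝ → ℝ := fun x => H (2 * x) - 2 * H x with hg
  have hgcont : Continuous g := by
    fun_prop
  have key : ∀ x : ℝ, ∃ n : ℤ, g x = n := by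
    intro x
    have e1 : ((2 * x : ℝ) : AddCircle (1:ℝ)) = 2 • (x : AddCircle (1:ℝ)) := by
      rw [two_smul, two_mul]; rfl
    have e2 : ((H (2*x) : ℝ) : AddCircle (1:ℝ)) = ((2 * H x : ℝ) : AddCircle (1:ℝ)) := by
      rw [← hlift, e1, hdouble, hlift, two_smul, two_mul]; rfl
    rw [QuotientAddGroup.eq_iff_sub_mem, AddSubgroup.mem_zmultiples_iff] at e2
    obtain ⟨k, hk⟩ := e2
    exact ⟨k, by simpa [hg] using hk.symm⟩
  -- g is constant, by the intermediate value theorem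
  have hconst : ∀ x : ℝ, g x = g 0 := by
    intro x
    obtain ⟨n, hn⟩ := key x
    obtain ⟨m, hm⟩ := key 0
    rw [hn, hm]
    by_contra hne
    have hne' : m ≠ n := fun e => hne (by rw [e])
    -- there is a point where g takes the non-integer value (min m n) + 1/2
    have hmid : ∃ y : ℝ, g y = (min (m:ℝ) (n:ℝ)) + 1/2 := by
      have hlt : min (m:ℝ) n < max (m:ℝ) n := by
        rcases lt_or_gt_of_ne hne' with hl | hl
        · have : (m:ℝ) < n := by exact_mod_cast hl
          rw [min_eq_left this.le, max_eq_right this.le]; exact this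
        · have : (n:ℝ) < m := by exact_mod_cast hl
          rw [min_eq_right this.le, max_eq_left this.le]; exact this
      have hgap : (1:ℝ) ≤ max (m:ℝ) n - min (m:ℝ) n := by
        rcases le_total (m:ℝ) n with hl | hl
        · rw [min_eq_left hl, max_eq_right hl]
          have : m < n := by exact_mod_cast lt_of_le_of_ne hl (by exact_mod_cast hne')
          have : m + 1 ≤ n := this
          have h3 : ((m:ℝ)) + 1 ≤ (n:ℝ) := by exact_mod_cast this
          linarith
        · rw [min_eq_right hl, max_eq_left hl]
          have : n < m := by
            exact_mod_cast lt_of_le_of_ne hl (by exact_mod_cast hne'.symm)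
          have : n + 1 ≤ m := this
          have h3 : ((n:ℝ)) + 1 ≤ (m:ℝ) := by exact_mod_cast this
          linarith
      have hmem : (min (m:ℝ) n + 1/2) ∈ Set.Icc (min (m:ℝ) n) (max (m:ℝ) n) := by
        constructor <;> linarith
      rcases le_total (m:ℝ) n with hl | hl
      · have : Set.Icc (g 0) (g x) ⊆ Set.range g := intermediate_value_univ 0 x hgcont
        have hmem' : (min (m:ℝ) n + 1/2) ∈ Set.Icc (g 0) (g x) := by
          rw [hn, hm, min_eq_left hl] at *
          exact ⟨hmem.1, by have := hmem.2; rwa [max_eq_right hl] at this⟩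
        exact this hmem'
      · have : Set.Icc (g x) (g 0) ⊆ Set.range g := intermediate_value_univ x 0 hgcont
        have hmem' : (min (m:ℝ) n + 1/2) ∈ Set.Icc (g x) (g 0) := by
          rw [hn, hm, min_eq_right hl] at *
          exact ⟨hmem.1, by have := hmem.2; rwa [max_eq_left hl] at this⟩
        exact this hmem'
    obtain ⟨y, hy⟩ := hmid
    obtain ⟨p, hp⟩ := key y
    rw [hp] at hy
    rcases le_total (m:ℝ) n with hl | hl
    · rw [min_eq_left hl] at hy
      have : (2*p : ℤ) = (2*m + 1 : ℤ) := by
        have : (2*(p:ℝ)) = 2*(m:ℝ) + 1 := by linarith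
        exact_mod_cast this
      omega
    · rw [min_eq_right hl] at hy
      have : (2*p : ℤ) = (2*n + 1 : ℤ) := by
        have : (2*(p:ℝ)) = 2*(n:ℝ) + 1 := by linarith
        exact_mod_cast this
      omega
  -- hence H (2x) = 2 H x - H 0
  have hH2 : ∀ x : ℝ, H (2 * x) = 2 * H x - H 0 := by
    intro x
    have := hconst x
    simp only [hg] at this
    have h0 : H (2 * 0) = H 0 := by norm_num
    rw [h0] at this
    linarith
  -- H 0 is an integer
  have hH0 : ∃ n : ℤ, H 0 = n := by
    obtain ⟨n, hn⟩ := key 0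
    refine ⟨-n, ?_⟩
    simp only [hg, mul_zero] at hn
    push_cast
    linarith
  -- ψ x = H x - H 0 - x is periodic, continuous, and ψ (2x) = 2 ψ x
  set ψ : ℝ → ℝ := fun x => H x - H 0 - x with hψ
  have hψcont : Continuous ψ := by fun_prop
  have hψper : Function.Periodic ψ 1 := by
    intro x; simp [hψ, hHper x]; ring
  have hψ2 : ∀ x : ℝ, ψ (2 * x) = 2 * ψ x := by
    intro x; simp only [hψ]; rw [hH2 x]; ring
  -- ψ is bounded
  obtain ⟨M, hM⟩ := (isCompact_Icc (a := (0:ℝ)) (b := 1)).exists_bound_of_continuousOn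
    hψcont.continuousOn
  have hbd : ∀ x : ℝ, |ψ x| ≤ M := by
    intro x
    have h1 : ψ (x - (⌊x⌋ : ℝ)) = ψ x := by
      have := hψper.sub_int_mul_eq (x := x) ⌊x⌋
      simpa using this
    have h2 : x - (⌊x⌋:ℝ) ∈ Set.Icc (0:ℝ) 1 := by
      constructor
      · linarith [Int.floor_le x]
      · linarith [Int.lt_floor_add_one x]
    have := hM _ h2
    rw [Real.norm_eq_abs, h1] at this
    exact this
  -- iterate: 2^n * ψ x = ψ (2^n * x), so ψ = 0
  have hψ0 : ∀ x : ℝ, ψ x = 0 := by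
    intro x
    have hiter : ∀ n : ℕ, (2:ℝ)^n * ψ x = ψ ((2:ℝ)^n * x) := by
      intro n
      induction n with
      | zero => simp
      | succ n ih =>
        have he : (2:ℝ)^(n+1) * x = 2 * ((2:ℝ)^n * x) := by ring
        rw [he, hψ2 ((2:ℝ)^n * x), ← ih]
        ring
    by_contra hne
    have hpos : 0 < |ψ x| := abs_pos.mpr hne
    obtain ⟨n, hn⟩ := pow_unbounded_of_one_lt (M / |ψ x|) (y := (2:ℝ)) one_lt_two
    have : M < (2:ℝ)^n * |ψ x| := by
      rwa [div_lt_iff₀ hpos] at hn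
    have h2 : (2:ℝ)^n * |ψ x| = |ψ ((2:ℝ)^n * x)| := by
      rw [← hiter n, abs_mul, abs_of_pos (by positivity : (0:ℝ) < (2:ℝ)^n)]
    rw [h2] at this
    exact absurd (hbd ((2:ℝ)^n * x)) (not_le.mpr this)
  -- hence H x = x + H 0 and h is the identity
  obtain ⟨n0, hn0⟩ := hH0
  have hHid : ∀ x : ℝ, H x = x + n0 := by
    intro x
    have := hψ0 x
    simp only [hψ] at this
    linarith [this, hn0]
  intro x
  induction x using QuotientAddGroup.induction_on with
  | H z =>
    rw [hlift z, hHid z]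
    have : ((z + (n0:ℝ) : ℝ) : AddCircle (1:ℝ)) = (z : AddCircle (1:ℝ)) + ((n0:ℝ) : AddCircle (1:ℝ)) := rfl
    rw [this]
    have hz : ((n0:ℝ) : AddCircle (1:ℝ)) = 0 := by
      rw [QuotientAddGroup.eq_zero_iff, AddSubgroup.mem_zmultiples_iff]
      exact ⟨n0, by simp⟩
    rw [hz, add_zero]
end
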